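/- Let A be a commutative unital complex Banach algebra whose set of invertible elements is dense in A. Let α be a monic polynomial over A of degree n ≥ 1, and let A_α = A[x]/(α(x)) be the quotient of the polynomial ring A[x] by the principal ideal generated by α (the Arens–Hoffman extension of A by α). Then for every polynomial β ∈ A[x] and every ε > 0 there exists c ∈ A with ‖c‖ < ε such that the image of β + c (the polynomial β with its constant coefficient perturbed by c) in A_α is invertible in A_α. In particular, since the Arens–Hoffman norm of an element of A_α is a weighted sum of the norms of the coefficients of its unique representative of degree less than n, the invertible group of A_α is dense in A_α. -/

import Mathlib

open Polynomial

section StrictDeriv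

variable {A : Type*} [NormedCommRing A] [NormedAlgebra ℂ A]

/-- Evaluation of a polynomial over a commutative normed algebra is strictly differentiable,
with derivative given by multiplication by the evaluation of the derivative polynomial. -/
lemma polynomial_eval_hasStrictFDerivAt (p : Polynomial A) (c : A) :
    HasStrictFDerivAt (fun y : A => p.eval y)
      (ContinuousLinearMap.mul ℂ A ((Polynomial.derivative p).eval c)) c := by
  induction p using Polynomial.induction_on with
  | C a =>
      have : (ContinuousLinearMap.mul ℂ A (((Polynomial.derivative (C a))).eval c)) = 0 := by
        simp
      rw [this]
      simpa using hasStrictFDerivAt_const a c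
  | add p q hp hq =>
      have := hp.add hq
      convert this using 1
      · rfl
      · rfl
      · funext y; simp
      · ext h
        simp [mul_add, add_mul]
  | monomial n a ih =>
      have hid : HasStrictFDerivAt (fun y : A => y) (ContinuousLinearMap.id ℂ A) c :=
        hasStrictFDerivAt_id c
      have hmul := ih.mul' hid
      convert hmul using 1
      · rfl
      · funext y
        simp [pow_succ, mul_assoc]
      · ext h
        simp only [ContinuousLinearMap.mul_apply', ContinuousLinearMap.add_apply, MulOpposite.smul_eq_mul_unop, ContinuousLinearMap.smul_apply, MulOpposite.unop_op,
          ContinuousLinearMap.coe_smul', Pi.smul_apply, ContinuousLinearMap.coe_id', id_eq,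
          ContinuousLinearMap.smulRight_apply, smul_eq_mul]
        simp only [derivative_C_mul, derivative_X_pow, eval_mul, eval_C, eval_natCast, eval_pow,
          eval_X]
        cases n with
        | zero => simp
        | succ m =>
            simp only [Nat.add_sub_cancel, Nat.cast_add, Nat.cast_one]
            ring
      
end StrictDeriv

section Key

variable {A : Type*} [NormedCommRing A] [NormedAlgebra ℂ A] [CompleteSpace A]

/-- Key lemma (Dawson–Feinstein): if the invertible group of `A` is dense and `q` is monic,
then near every point there is `c` with `q.eval c` invertible. -/
lemma key_lemma (hA : Dense {a : A | IsUnit a}) :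
    ∀ (n : ℕ) (q : Polynomial A), q.natDegree ≤ n → q.Monic →
      ∀ (a : A) (ε : ℝ), 0 < ε → ∃ c : A, ‖c - a‖ < ε ∧ IsUnit (q.eval c) := by
  intro n
  induction n with
  | zero =>
      intro q hdeg hq a ε hε
      have h1 : q = 1 := hq.natDegree_eq_zero.mp (Nat.le_zero.mp hdeg)
      exact ⟨a, by simpa using hε, by simp [h1]⟩
  | succ n IH =>
      intro q hdeg hq a ε hε
      rcases subsingleton_or_nontrivial A with hS | hN
      · exact ⟨a, by simpa using hε, isUnit_of_subsingleton _⟩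
      rcases Nat.lt_succ_iff_lt_or_eq.mp (Nat.lt_succ_of_le hdeg) with h | h
      · exact IH q (Nat.lt_succ_iff.mp h) hq a ε hε
      -- now q.natDegree = n + 1
      have hwA : ((n + 1 : ℕ) : A) = algebraMap ℂ A ((n + 1 : ℕ) : ℂ) := by
        simp
      have hw : IsUnit ((n + 1 : ℕ) : A) := by
        rw [hwA]
        exact (isUnit_iff_ne_zero.mpr (by exact_mod_cast Nat.succ_ne_zero n)).map
          (algebraMap ℂ A)
      obtain ⟨u, hu⟩ := hw
      set d := Polynomial.derivative q with hd_def
      have hdcoeff : d.coeff n = ((n + 1 : ℕ) : A) := by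
        rw [hd_def, coeff_derivative]
        have : q.coeff (n + 1) = 1 := by
          have := hq.coeff_natDegree
          rwa [h] at this
        rw [this, one_mul]
        push_cast
        ring
      set r := C ((↑u⁻¹ : A)) * d with hr_def
      have hrdeg : r.natDegree ≤ n := by
        refine le_trans (natDegree_C_mul_le _ _) ?_
        show (Polynomial.derivative q).natDegree ≤ n
        have := Polynomial.natDegree_derivative_le q
        omega
      have hrcoeff : r.coeff n = 1 := by
        rw [hr_def, coeff_C_mul, hdcoeff, ← hu, Units.inv_mul]
      have hr : r.Monic := monic_of_natDegree_le_of_coeff_eq_one n hrdeg hrcoeff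
      obtain ⟨c₀, hc₀, hrunit⟩ := IH r hrdeg hr a (ε / 2) (half_pos hε)
      have hdunit : IsUnit (d.eval c₀) := by
        have : d.eval c₀ = ↑u * (r.eval c₀) := by
          rw [hr_def]
          simp only [eval_mul, eval_C]
          rw [← mul_assoc, Units.mul_inv, one_mul]
        rw [this]
        exact u.isUnit.mul hrunit
      -- inverse function theorem
      have hderiv := polynomial_eval_hasStrictFDerivAt q c₀
      have hsurj : LinearMap.range (ContinuousLinearMap.mul ℂ A (d.eval c₀) : A →ₗ[ℂ] A) = ⊤ := by
        obtain ⟨v, hv⟩ := hdunit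
        rw [LinearMap.range_eq_top]
        intro y
        refine ⟨(↑v⁻¹ : A) * y, ?_⟩
        simp only [ContinuousLinearMap.coe_coe, ContinuousLinearMap.mul_apply']
        rw [← hv, ← mul_assoc, Units.mul_inv, one_mul]
      have hmap := hderiv.map_nhds_eq_of_surj hsurj
      have hball : Metric.ball c₀ (ε / 2) ∈ nhds c₀ := Metric.ball_mem_nhds _ (half_pos hε)
      have himg : (fun y : A => q.eval y) '' (Metric.ball c₀ (ε / 2)) ∈ nhds (q.eval c₀) := by
        rw [← hmap]
        exact Filter.image_mem_map hball
      obtain ⟨O, hOsub, hOopen, hOmem⟩ := mem_nhds_iff.mp himg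
      obtain ⟨v, hvunit, hvO⟩ := hA.exists_mem_open hOopen ⟨_, hOmem⟩
      obtain ⟨c, hcball, hceq⟩ := hOsub hvO
      refine ⟨c, ?_, ?_⟩
      · have h1 : ‖c - c₀‖ < ε / 2 := by
          rw [← dist_eq_norm]
          exact Metric.mem_ball.mp hcball
        calc ‖c - a‖ = ‖(c - c₀) + (c₀ - a)‖ := by ring_nf
          _ ≤ ‖c - c₀‖ + ‖c₀ - a‖ := norm_add_le _ _
          _ < ε / 2 + ε / 2 := add_lt_add h1 hc₀
          _ = ε := by ring
      · rw [show q.eval c = v from hceq]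
        exact hvunit

end Key

/-- **Main theorem (Theorem 2.1).** Let `A` be a commutative unital complex Banach algebra
with dense invertible group and `α` a monic polynomial over `A` of degree `n ≥ 1`.  Then for
every polynomial `β ∈ A[x]` and every `ε > 0` one can perturb the constant coefficient of `β`
by an element `c` of norm less than `ε` so that the image of `β + c` in the Arens–Hoffman
extension `A_α = A[x]/(α)` is invertible.  (Since the Arens–Hoffman norm is a weighted sum of
the norms of the coefficients, this shows `G(A_α)` is dense in `A_α`.) -/
theorem arensHoffman_perturb_constant_coeff_invertible
    (A : Type*) [NormedCommRing A] [NormedAlgebra ℂ A] [CompleteSpace A]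
    (hA : Dense {a : A | IsUnit a})
    (α : Polynomial A) (hmonic : α.Monic) (hdeg : 1 ≤ α.natDegree) :
    ∀ (β : Polynomial A) (ε : ℝ), 0 < ε →
      ∃ c : A, ‖c‖ < ε ∧ IsUnit (AdjoinRoot.mk α (β + Polynomial.C c)) := by
  intro β ε hε
  set B := AdjoinRoot α with hB
  let pb : PowerBasis A B := AdjoinRoot.powerBasis' hmonic
  let b := pb.basis
  set M : Matrix (Fin pb.dim) (Fin pb.dim) A :=
    LinearMap.toMatrix b b ((LinearMap.mul A B) (AdjoinRoot.mk α β)) with hM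
  set q : Polynomial A := Matrix.charpoly (-M) with hq_def
  have hq : q.Monic := Matrix.charpoly_monic _
  obtain ⟨c, hc, hcu⟩ := key_lemma hA q.natDegree q le_rfl hq 0 ε hε
  refine ⟨c, by simpa using hc, ?_⟩
  -- identification of q.eval c with a determinant
  have hmkadd : AdjoinRoot.mk α (β + Polynomial.C c)
      = AdjoinRoot.mk α β + algebraMap A B c := by
    rw [map_add]
    congr 1
  have hsmul : (LinearMap.mul A B) (algebraMap A B c) = c • LinearMap.id := by
    ext z
    simp [Algebra.smul_def]
  have heval : q.eval c =
      (LinearMap.toMatrix b b ((LinearMap.mul A B) (AdjoinRoot.mk α (β + Polynomial.C c)))).det := by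
    rw [hq_def, Matrix.charpoly]
    have : Polynomial.eval c (Matrix.charmatrix (-M)).det
        = ((Matrix.charmatrix (-M)).map (Polynomial.evalRingHom c)).det := by
      have h0 := RingHom.map_det (Polynomial.evalRingHom c) (Matrix.charmatrix (-M))
      simpa [RingHom.mapMatrix_apply] using h0
    rw [this]
    congr 1
    ext i j
    rw [hmkadd, map_add, map_add, hsmul, map_smul]
    by_cases hij : i = j
    · subst hij
      simp [Matrix.charmatrix_apply_eq, LinearMap.toMatrix_id, Matrix.smul_apply,
        Matrix.one_apply_eq, hM]
      ring
    · simp [Matrix.charmatrix_apply_ne _ _ _ hij, LinearMap.toMatrix_id, Matrix.smul_apply,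
        Matrix.one_apply_ne hij, hM]
  rw [heval] at hcu
  -- from invertible determinant to invertible element
  have hMunit : IsUnit (LinearMap.toMatrix b b
      ((LinearMap.mul A B) (AdjoinRoot.mk α (β + Polynomial.C c)))) :=
    (Matrix.isUnit_iff_isUnit_det _).mpr hcu
  obtain ⟨U, hU⟩ := hMunit
  set g : B →ₗ[A] B := Matrix.toLin b b (↑U⁻¹ : Matrix (Fin pb.dim) (Fin pb.dim) A) with hg
  have hcomp : ((LinearMap.mul A B) (AdjoinRoot.mk α (β + Polynomial.C c))).comp g
      = LinearMap.id := by
    apply (LinearMap.toMatrix b b).injective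
    rw [LinearMap.toMatrix_comp b b b, hg, LinearMap.toMatrix_toLin, ← hU, Units.mul_inv,
      LinearMap.toMatrix_id]
  have hfin : AdjoinRoot.mk α (β + Polynomial.C c) * (g 1) = 1 := by
    have h1 := congrArg (fun f : B →ₗ[A] B => f (1 : B)) hcomp
    simp only [LinearMap.comp_apply, LinearMap.id_apply, LinearMap.mul_apply'] at h1
    exact h1
  exact IsUnit.of_mul_eq_one _ hfin
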